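/- Let F_β(y) ⊆ ℝ^m be a nonempty closed convex set which is invariant under translations by λ·𝟙 (λ ∈ ℝ, 𝟙 the all-ones vector), and let G ⊆ F_β(y) be a convex subset, dense in F_β(y), invariant under translation by λ·𝟙, and such that for some ν₀ > 0, b ∈ G implies b + ν e_i ∈ G for all i = 1,…,m and 0 < ν < ν₀. Then G is open and equals the interior of F_β(y). -/

import Mathlib

/-- Let `F ⊆ ℝ^m` be a nonempty closed convex set invariant under
translations by multiples of the all-ones vector `𝟙`, and let `G ⊆ F` be convex, dense in
`F`, invariant under translations by multiples of `𝟙`, and such that for some `ν₀ > 0`,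
`b ∈ G` implies `b + ν eᵢ ∈ G` for every standard basis vector `eᵢ` and `0 < ν < ν₀`.
Then `G` is open and equals the interior of `F`. -/
theorem dense_convex_subset_eq_interior (m : ℕ)
    (F G : Set (Fin m → ℝ))
    (hFne : F.Nonempty) (hFclosed : IsClosed F) (hFconv : Convex ℝ F)
    (hFones : ∀ b ∈ F, ∀ lam : ℝ, b + lam • ((fun _ => 1) : Fin m → ℝ) ∈ F)
    (hGF : G ⊆ F) (hGconv : Convex ℝ G)
    (hGdense : F ⊆ closure G)
    (hGones : ∀ b ∈ G, ∀ lam : ℝ, b + lam • ((fun _ => 1) : Fin m → ℝ) ∈ G)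
    (hν : ∃ ν₀ > (0 : ℝ), ∀ b ∈ G, ∀ i : Fin m, ∀ ν : ℝ, 0 < ν → ν < ν₀ →
      b + ν • (Pi.single i 1 : Fin m → ℝ) ∈ G) :
    IsOpen G ∧ G = interior F := by
  obtain ⟨ν₀, hν₀, hstep⟩ := hν
  set ν : ℝ := ν₀ / 2 with hνdef
  have hνpos : 0 < ν := by positivity
  have hνlt : ν < ν₀ := by simp [hνdef]; linarith
  -- G is open
  have hGopen : IsOpen G := by
    rw [Metric.isOpen_iff]
    intro b hb
    refine ⟨ν / (2 * (m + 1)), by positivity, fun x hx => ?_⟩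
    -- weights
    set d : Fin m → ℝ := fun j => (x j - b j) / ν with hd
    have hdbound : ∀ j, |d j| < 1 / (2 * (m + 1)) := by
      intro j
      have h1 : dist (x j) (b j) ≤ dist x b := dist_le_pi_dist x b j
      have h2 : dist x b < ν / (2 * (m + 1)) := hx
      have : |x j - b j| < ν / (2 * (m + 1)) := by
        rw [← Real.dist_eq]; exact lt_of_le_of_lt h1 h2
      rw [hd]
      rw [abs_div, abs_of_pos hνpos, div_lt_iff₀ hνpos]
      calc |x j - b j| < ν / (2 * (m + 1)) := this
        _ = 1 / (2 * (m + 1)) * ν := by ring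
    set w₀ : ℝ := (1 - ∑ j, d j) / (m + 1) with hw₀
    have hsumd : |∑ j, d j| ≤ (m : ℝ) / (2 * (m + 1)) := by
      calc |∑ j, d j| ≤ ∑ j, |d j| := Finset.abs_sum_le_sum_abs _ _
        _ ≤ ∑ _j : Fin m, (1 / (2 * ((m : ℝ) + 1))) :=
            Finset.sum_le_sum fun j _ => (hdbound j).le
        _ = (m : ℝ) / (2 * (m + 1)) := by
            simp [Finset.sum_const]
            field_simp
    have hmlt : (m : ℝ) / (2 * (m + 1)) < 1 := by
      rw [div_lt_one (by positivity)]
      have : (0:ℝ) < (m:ℝ) + 2 := by positivity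
      nlinarith [Nat.cast_nonneg (α := ℝ) m]
    have hw₀pos : 1 / (2 * ((m:ℝ) + 1)) < w₀ := by
      rw [hw₀]
      rw [lt_div_iff₀ (by positivity : (0:ℝ) < (m:ℝ) + 1)]
      have h1 : ∑ j, d j ≤ (m : ℝ) / (2 * (m + 1)) := (abs_le.mp hsumd).2
      have h2 : 1 / (2 * ((m:ℝ) + 1)) * ((m:ℝ) + 1) = 1/2 := by
        field_simp
      rw [h2]
      have : (m : ℝ) / (2 * (m + 1)) < 1/2 := by
        rw [div_lt_iff₀ (by positivity : (0:ℝ) < 2 * ((m:ℝ)+1))]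
        nlinarith [Nat.cast_nonneg (α := ℝ) m]
      linarith
    -- the convex combination
    set W : Option (Fin m) → ℝ := fun o => o.elim w₀ (fun j => d j + w₀) with hW
    set Z : Option (Fin m) → (Fin m → ℝ) :=
      fun o => o.elim (b + (-ν) • ((fun _ => 1) : Fin m → ℝ))
        (fun j => b + ν • (Pi.single j 1 : Fin m → ℝ)) with hZ
    have hWnonneg : ∀ o ∈ (Finset.univ : Finset (Option (Fin m))), 0 ≤ W o := by
      rintro (_ | j) _
      · simp only [hW, Option.elim]
        have h1 : (0:ℝ) < 1 / (2 * ((m:ℝ) + 1)) := by positivity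
        linarith [hw₀pos]
      · simp only [hW, Option.elim]
        have := (abs_le.mp (hdbound j).le).1
        linarith
    have hWsum : ∑ o, W o = 1 := by
      rw [Fintype.sum_option]
      simp only [hW, Option.elim]
      rw [Finset.sum_add_distrib, Finset.sum_const, Finset.card_univ, Fintype.card_fin,
        nsmul_eq_mul]
      rw [hw₀]
      field_simp
      ring
    have hZmem : ∀ o ∈ (Finset.univ : Finset (Option (Fin m))), Z o ∈ G := by
      rintro (_ | j) _
      · exact hGones b hb (-ν)
      · exact hstep b hb j ν hνpos hνlt
    have hcomb : ∑ o, W o • Z o = x := by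
      funext k
      rw [Fintype.sum_apply, Fintype.sum_option]
      simp only [hW, hZ, Option.elim, Pi.smul_apply, Pi.add_apply, smul_eq_mul,
        Pi.single_apply]
      have hsplit : ∀ j : Fin m,
          (d j + w₀) * (b k + ν * (if k = j then (1:ℝ) else 0)) =
          (d j + w₀) * b k + (if j = k then (d j + w₀) * ν else 0) := by
        intro j
        by_cases h : k = j
        · subst h; simp; ring
        · have h' : j ≠ k := fun hh => h hh.symm
          simp [h, h']
      rw [Finset.sum_congr rfl (fun j _ => hsplit j)]
      rw [Finset.sum_add_distrib, Finset.sum_ite_eq' (Finset.univ) k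
        (fun j => (d j + w₀) * ν)]
      simp only [Finset.mem_univ, if_true]
      rw [← Finset.sum_mul, Finset.sum_add_distrib, Finset.sum_const, Finset.card_univ,
        Fintype.card_fin, nsmul_eq_mul]
      have hdk : d k * ν = x k - b k := by
        rw [hd]; field_simp
      have hw₀sum : w₀ * (b k + -ν * 1) + ((∑ j, d j + (m:ℝ) * w₀) * b k + (d k + w₀) * ν)
          = (w₀ + (∑ j, d j + (m:ℝ) * w₀)) * b k + d k * ν := by ring
      rw [hw₀sum, hdk]
      have : w₀ + (∑ j, d j + (m:ℝ) * w₀) = 1 := by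
        rw [hw₀]; field_simp; ring
      rw [this]; ring
    have := hGconv.sum_mem hWnonneg hWsum hZmem
    rwa [hcomb] at this
  refine ⟨hGopen, ?_⟩
  -- closure G = F
  have hclos : closure G = F :=
    le_antisymm (closure_minimal hGF hFclosed) hGdense
  -- G nonempty
  obtain ⟨p, hp⟩ := hFne
  have hGne : G.Nonempty := by
    by_contra h
    rw [Set.not_nonempty_iff_eq_empty] at h
    rw [h, closure_empty] at hclos
    exact absurd (hclos ▸ hp) (Set.notMem_empty p)
  obtain ⟨b, hb⟩ := hGne
  apply le_antisymm
  · exact interior_maximal hGF hGopen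
  · -- interior F ⊆ G
    intro z hz
    rw [← hclos] at hz
    -- find z' = z + t (z - b) ∈ closure G
    obtain ⟨ε, hε, hball⟩ := Metric.mem_nhds_iff.mp (mem_interior_iff_mem_nhds.mp hz)
    set t : ℝ := ε / (2 * (dist z b + 1)) with ht
    have hdist_nonneg : (0:ℝ) ≤ dist z b := dist_nonneg
    have htpos : 0 < t := by positivity
    set z' : Fin m → ℝ := z + t • (z - b) with hz'
    have hz'mem : z' ∈ closure G := by
      apply hball
      rw [Metric.mem_ball, hz']
      have : dist (z + t • (z - b)) z = t * dist z b := by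
        rw [dist_eq_norm]
        simp only [add_sub_cancel_left]
        rw [norm_smul, Real.norm_eq_abs, abs_of_pos htpos, dist_eq_norm]
      rw [this, ht]
      rw [div_mul_eq_mul_div, div_lt_iff₀ (by positivity : (0:ℝ) < 2 * (dist z b + 1))]
      nlinarith
    -- z ∈ openSegment b z'
    have hbmemint : b ∈ interior G := by rwa [hGopen.interior_eq]
    have hseg : z ∈ openSegment ℝ b z' := by
      refine ⟨t / (1 + t), 1 / (1 + t), by positivity, by positivity, ?_, ?_⟩
      · field_simp
        ring
      · rw [hz']
        funext k
        simp only [Pi.add_apply, Pi.smul_apply, Pi.sub_apply, smul_eq_mul]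
        field_simp
        ring
    have := hGconv.openSegment_interior_closure_subset_interior hbmemint hz'mem hseg
    rwa [hGopen.interior_eq] at this
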